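/- The solution space of the system (i)-(ii) above (edge equations and triangle equations on ℝ^{3m}) is an affine subspace of dimension exactly m/2 + 1, and after imposing the additional holonomy equation ᵗT_γ θ = K (a nontrivial linear functional on this solution space), the solution space has dimension m/2. -/

import Mathlib

open Finset Real

/-- A combinatorial triangulation `O = (V, E, F)` of the torus with `m`
triangles. `Cor` is the set of the `3m` corners of triangles; `tri j` is the
triangle containing the corner `j`, `vert j` its vertex, `opp j` the edge of
its triangle opposite to it; `nxt` is the counterclockwise next corner inside
each triangle (a fixed-point free rotation of order 3 on each fiber of `tri`);
`sgm j` is the other corner opposite to the same edge `opp j`, in the triangle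
adjacent across that edge.  The cardinality axioms encode `|F| = m`,
`2|E| = 3m`, `2|V| = m` (so `χ = V - E + F = 0`, as for the torus), and the
last axiom says that the two endpoints of an edge (namely the vertices of the
two other corners of an adjacent triangle) do not depend, as an unordered
pair, on the side from which they are computed. -/
structure TorusTriangulation (Cor F E V : Type*)
    [Fintype Cor] [DecidableEq Cor] [Fintype F] [DecidableEq F]
    [Fintype E] [DecidableEq E] [Fintype V] [DecidableEq V] where
  m : ℕ
  hm : 0 < m
  tri : Cor → F
  vert : Cor → V
  opp : Cor → E
  nxt : Cor → Cor
  sgm : Cor → Cor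
  card_cor : Fintype.card Cor = 3 * m
  card_faces : Fintype.card F = m
  card_edges : 2 * Fintype.card E = 3 * m
  card_verts : 2 * Fintype.card V = m
  tri_nxt : ∀ j, tri (nxt j) = tri j
  nxt_nxt_nxt : ∀ j, nxt (nxt (nxt j)) = j
  nxt_ne : ∀ j, nxt j ≠ j
  tri_fiber : ∀ j k, tri j = tri k → k = j ∨ k = nxt j ∨ k = nxt (nxt j)
  sgm_sgm : ∀ j, sgm (sgm j) = j
  sgm_ne : ∀ j, sgm j ≠ j
  opp_sgm : ∀ j, opp (sgm j) = opp j
  opp_fiber : ∀ j k, opp j = opp k → k = j ∨ k = sgm j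
  opp_surj : Function.Surjective opp
  endpoints_sgm : ∀ j, ({vert (nxt j), vert (nxt (nxt j))} : Multiset V) =
    {vert (nxt (sgm j)), vert (nxt (nxt (sgm j)))}

variable {Cor F E V : Type*}
    [Fintype Cor] [DecidableEq Cor] [Fintype F] [DecidableEq F]
    [Fintype E] [DecidableEq E] [Fintype V] [DecidableEq V]

namespace TorusTriangulation

variable (T : TorusTriangulation Cor F E V)

lemma nxt_bij : Function.Bijective T.nxt := by
  constructor
  · intro a b hab
    have : T.nxt (T.nxt (T.nxt a)) = T.nxt (T.nxt (T.nxt b)) := by rw [hab]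
    rwa [T.nxt_nxt_nxt, T.nxt_nxt_nxt] at this
  · intro a
    exact ⟨T.nxt (T.nxt a), T.nxt_nxt_nxt a⟩

lemma nxt2_ne (j : Cor) : T.nxt (T.nxt j) ≠ j := by
  intro h
  have : T.nxt (T.nxt (T.nxt j)) = T.nxt j := by rw [h]
  rw [T.nxt_nxt_nxt] at this
  exact T.nxt_ne j this.symm

lemma nxt2_ne_nxt (j : Cor) : T.nxt (T.nxt j) ≠ T.nxt j := fun h =>
  T.nxt_ne j ((nxt_bij T).1 h)

lemma oppFiber (j : Cor) :
    Finset.univ.filter (fun k => T.opp k = T.opp j) = {j, T.sgm j} := by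
  ext k
  simp only [Finset.mem_filter, Finset.mem_univ, true_and, Finset.mem_insert,
    Finset.mem_singleton]
  constructor
  · intro hk
    exact T.opp_fiber j k hk.symm
  · rintro (rfl | rfl)
    · rfl
    · exact T.opp_sgm j

lemma triFiber (j : Cor) :
    Finset.univ.filter (fun k => T.tri k = T.tri j) = {j, T.nxt j, T.nxt (T.nxt j)} := by
  ext k
  simp only [Finset.mem_filter, Finset.mem_univ, true_and, Finset.mem_insert,
    Finset.mem_singleton]
  constructor
  · intro hk
    exact T.tri_fiber j k hk.symm
  · rintro (rfl | rfl | rfl)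
    · rfl
    · exact T.tri_nxt j
    · rw [T.tri_nxt, T.tri_nxt]

lemma sum_oppFiber (v : Cor → ℝ) (j : Cor) :
    ∑ k ∈ Finset.univ.filter (fun k => T.opp k = T.opp j), v k = v j + v (T.sgm j) := by
  rw [oppFiber, Finset.sum_pair (T.sgm_ne j).symm]

lemma sum_triFiber (v : Cor → ℝ) (j : Cor) :
    ∑ k ∈ Finset.univ.filter (fun k => T.tri k = T.tri j), v k
      = v j + v (T.nxt j) + v (T.nxt (T.nxt j)) := by
  rw [triFiber]
  rw [Finset.sum_insert (by
    simp only [Finset.mem_insert, Finset.mem_singleton]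
    push_neg
    exact ⟨(T.nxt_ne j).symm, (T.nxt2_ne j).symm⟩)]
  rw [Finset.sum_pair (T.nxt2_ne_nxt j).symm]
  ring

/-- The linear map encoding the edge and triangle equations. -/
def Phi : (Cor → ℝ) →ₗ[ℝ] (E → ℝ) × (F → ℝ) where
  toFun v := (fun e => ∑ j ∈ Finset.univ.filter (fun j => T.opp j = e), v j,
              fun f => ∑ j ∈ Finset.univ.filter (fun j => T.tri j = f), v j)
  map_add' x y := by
    refine Prod.ext ?_ ?_ <;> funext z <;> simp [Finset.sum_add_distrib]
  map_smul' c x := by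
    refine Prod.ext ?_ ?_ <;> funext z <;> simp [Finset.mul_sum]

/-- The canonical relation functional. -/
def psi : ((E → ℝ) × (F → ℝ)) →ₗ[ℝ] ℝ where
  toFun p := ∑ e, p.1 e - ∑ f, p.2 f
  map_add' x y := by simp [Finset.sum_add_distrib]; ring
  map_smul' c x := by simp [Finset.mul_sum, mul_sub]

lemma psi_ne_zero (hF : Nonempty F) : (psi (E := E) (F := F)) ≠ 0 := by
  intro h
  obtain ⟨f⟩ := hF
  have := congrFun (congrArg DFunLike.coe h) ((0 : E → ℝ), (Pi.single f 1 : F → ℝ))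
  simp [psi, Finset.sum_pi_single] at this

lemma psi_comp (v : Cor → ℝ) : psi (Phi T v) = 0 := by
  simp only [psi, Phi, LinearMap.coe_mk, AddHom.coe_mk]
  rw [Finset.sum_fiberwise Finset.univ T.opp v, Finset.sum_fiberwise Finset.univ T.tri v]
  ring

lemma Phi_single (j : Cor) :
    Phi T (Pi.single j 1) = ((Pi.single (T.opp j) 1 : E → ℝ), (Pi.single (T.tri j) 1 : F → ℝ)) := by
  refine Prod.ext ?_ ?_ <;> funext z <;>
    simp only [Phi, LinearMap.coe_mk, AddHom.coe_mk] <;>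
    rw [show ∀ s : Finset Cor, ∑ k ∈ s, Pi.single j (1 : ℝ) k
        = if j ∈ s then 1 else 0 from fun s => by
      rw [← Finset.sum_ite_eq' s j (fun _ => (1:ℝ))]
      exact Finset.sum_congr rfl fun k _ => by rw [Pi.single_apply]] <;>
    simp [Pi.single_apply, eq_comm]

lemma Phi_fst (v : Cor → ℝ) (j : Cor) :
    (Phi T v).1 (T.opp j) = v j + v (T.sgm j) := sum_oppFiber T v j

lemma Phi_snd (v : Cor → ℝ) (j : Cor) :
    (Phi T v).2 (T.tri j) = v j + v (T.nxt j) + v (T.nxt (T.nxt j)) := sum_triFiber T v j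

end TorusTriangulation

lemma surj_of_apply_ne_zero {M : Type*} [AddCommGroup M] [Module ℝ M]
    (φ : M →ₗ[ℝ] ℝ) (x : M) (hx : φ x ≠ 0) : Function.Surjective φ := fun y =>
  ⟨(y / φ x) • x, by rw [map_smul, smul_eq_mul]; field_simp⟩

/-- Dimension count for the linear system `Σ`: assuming the dual graph is
connected and the `α`-weights around every vertex sum to `2π` (doubled count
`4π` below), the solution space of the edge equations (i) and triangle
equations (ii) is a nonempty affine subspace of `ℝ^{3m}` whose direction `D`
(the space of homogeneous solutions) has dimension exactly
`m/2 + 1 = |V| + 1`; and after imposing one further holonomy equation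
`h(θ) = K` for a linear functional `h` not vanishing identically on `D`, the
solutions still exist and the direction `D' = D ∩ ker h` has dimension
`m/2 = |V|`. -/


theorem solution_space_dimension (T : TorusTriangulation Cor F E V)
    (α : E → ℝ)
    (hconn : ∀ f f' : F, Relation.ReflTransGen
      (fun g g' => ∃ j, T.tri j = g ∧ T.tri (T.sgm j) = g') f f')
    (hvert : ∀ v : V,
      ∑ j ∈ Finset.univ.filter (fun j => T.vert j = v),
        (α (T.opp (T.nxt j)) + α (T.opp (T.nxt (T.nxt j)))) = 4 * π)
    (D : Submodule ℝ (Cor → ℝ))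
    (hD : ∀ v : Cor → ℝ, v ∈ D ↔
      ((∀ j, v j + v (T.sgm j) = 0) ∧
       (∀ j, v j + v (T.nxt j) + v (T.nxt (T.nxt j)) = 0))) :
    (∃ θ : Cor → ℝ, (∀ j, θ j + θ (T.sgm j) = π - α (T.opp j)) ∧
        (∀ j, θ j + θ (T.nxt j) + θ (T.nxt (T.nxt j)) = π)) ∧
    Module.finrank ℝ D = Fintype.card V + 1 ∧
    ∀ h : (Cor → ℝ) →ₗ[ℝ] ℝ, (∃ v ∈ D, h v ≠ 0) → ∀ K : ℝ,
      (∃ θ : Cor → ℝ, (∀ j, θ j + θ (T.sgm j) = π - α (T.opp j)) ∧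
          (∀ j, θ j + θ (T.nxt j) + θ (T.nxt (T.nxt j)) = π) ∧ h θ = K) ∧
      ∀ D' : Submodule ℝ (Cor → ℝ), (∀ v, v ∈ D' ↔ v ∈ D ∧ h v = 0) →
        Module.finrank ℝ D' = Fintype.card V := by
    classical
  have hCorpos : 0 < Fintype.card Cor := by rw [T.card_cor]; have := T.hm; omega
  obtain ⟨j₀⟩ : Nonempty Cor := Fintype.card_pos_iff.mp hCorpos
  have hFne : Nonempty F := Fintype.card_pos_iff.mp (by rw [T.card_faces]; exact T.hm)
  -- the annihilator of the range of Φ is spanned by ψ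
  have hann : (LinearMap.range (TorusTriangulation.Phi T)).dualAnnihilator
      = Submodule.span ℝ {TorusTriangulation.psi (E := E) (F := F)} := by
    apply le_antisymm
    · intro φ hφ
      rw [Submodule.mem_dualAnnihilator] at hφ
      have hφ' : ∀ v : Cor → ℝ, φ (TorusTriangulation.Phi T v) = 0 :=
        fun v => hφ _ (LinearMap.mem_range_self _ v)
      set lam : E → ℝ := fun e => φ ((Pi.single e 1 : E → ℝ), 0) with hlam
      set mu : F → ℝ := fun f => φ ((0 : E → ℝ), Pi.single f 1) with hmu
      have key : ∀ j : Cor, lam (T.opp j) + mu (T.tri j) = 0 := by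
        intro j
        have h1 := hφ' (Pi.single j 1)
        rw [TorusTriangulation.Phi_single] at h1
        have hsp : ((Pi.single (T.opp j) 1 : E → ℝ), (Pi.single (T.tri j) 1 : F → ℝ))
            = ((Pi.single (T.opp j) 1 : E → ℝ), (0 : F → ℝ))
              + ((0 : E → ℝ), (Pi.single (T.tri j) 1 : F → ℝ)) := by simp
        rw [hsp, map_add] at h1
        exact h1
      have step : ∀ g g' : F, (∃ j, T.tri j = g ∧ T.tri (T.sgm j) = g') → mu g = mu g' := by
        rintro g g' ⟨j, rfl, rfl⟩
        have h1 := key j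
        have h2 := key (T.sgm j)
        rw [T.opp_sgm] at h2
        linarith
      have mconst : ∀ g g' : F, mu g = mu g' := by
        intro g g'
        induction hconn g g' with
        | refl => rfl
        | tail h1 h2 ih => exact ih.trans (step _ _ h2)
      set c : ℝ := mu (T.tri j₀) with hc
      have lamval : ∀ e, lam e = -c := by
        intro e
        obtain ⟨j, rfl⟩ := T.opp_surj e
        have k1 := key j
        have k2 := mconst (T.tri j) (T.tri j₀)
        rw [← hc] at k2
        linarith
      have muval : ∀ f, mu f = c := fun f => mconst f _
      rw [Submodule.mem_span_singleton]
      refine ⟨-c, ?_⟩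
      apply LinearMap.ext
      rintro ⟨a, b⟩
      have hfst : φ (a, (0 : F → ℝ)) = ∑ e, a e * lam e := by
        calc φ (a, (0 : F → ℝ))
            = φ.comp (LinearMap.inl ℝ (E → ℝ) (F → ℝ)) (∑ e, Pi.single e (a e)) := by
              rw [Finset.univ_sum_single]; rfl
          _ = ∑ e, φ.comp (LinearMap.inl ℝ (E → ℝ) (F → ℝ)) (Pi.single e (a e)) :=
              map_sum _ _ _
          _ = ∑ e, a e * lam e := by
              refine Finset.sum_congr rfl fun e _ => ?_
              have hse : (Pi.single e (a e) : E → ℝ) = a e • (Pi.single e 1 : E → ℝ) := by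
                ext x; by_cases hx : x = e <;> simp [Pi.single_apply, hx]
              rw [hse, map_smul, smul_eq_mul]
              rfl
      have hsnd : φ ((0 : E → ℝ), b) = ∑ f, b f * mu f := by
        calc φ ((0 : E → ℝ), b)
            = φ.comp (LinearMap.inr ℝ (E → ℝ) (F → ℝ)) (∑ f, Pi.single f (b f)) := by
              rw [Finset.univ_sum_single]; rfl
          _ = ∑ f, φ.comp (LinearMap.inr ℝ (E → ℝ) (F → ℝ)) (Pi.single f (b f)) :=
              map_sum _ _ _
          _ = ∑ f, b f * mu f := by
              refine Finset.sum_congr rfl fun f _ => ?_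
              have hsf : (Pi.single f (b f) : F → ℝ) = b f • (Pi.single f 1 : F → ℝ) := by
                ext x; by_cases hx : x = f <;> simp [Pi.single_apply, hx]
              rw [hsf, map_smul, smul_eq_mul]
              rfl
      have hval : φ (a, b) = (∑ e, a e * lam e) + ∑ f, b f * mu f := by
        have hab : ((a, b) : (E → ℝ) × (F → ℝ)) = (a, 0) + (0, b) := by simp
        rw [hab, map_add, hfst, hsnd]
      rw [LinearMap.smul_apply, smul_eq_mul, hval]
      simp only [lamval, muval]
      have hpsiab : TorusTriangulation.psi ((a, b) : (E → ℝ) × (F → ℝ))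
          = ∑ e, a e - ∑ f, b f := rfl
      rw [hpsiab]
      rw [← Finset.sum_mul, ← Finset.sum_mul]
      ring
    · rw [Submodule.span_singleton_le_iff_mem, Submodule.mem_dualAnnihilator]
      rintro w ⟨v, rfl⟩
      exact T.psi_comp v
  -- dimension bookkeeping
  have hW : Module.finrank ℝ ((E → ℝ) × (F → ℝ)) = Fintype.card E + Fintype.card F := by
    rw [Module.finrank_prod, Module.finrank_fintype_fun_eq_card,
      Module.finrank_fintype_fun_eq_card]
  have hannrank : Module.finrank ℝ
      (LinearMap.range (TorusTriangulation.Phi T)).dualAnnihilator = 1 := by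
    rw [hann]; exact finrank_span_singleton (TorusTriangulation.psi_ne_zero hFne)
  have hrangerank : Module.finrank ℝ (LinearMap.range (TorusTriangulation.Phi T)) + 1
      = Fintype.card E + Fintype.card F := by
    have h1 := Submodule.finrank_quotient_add_finrank
      (LinearMap.range (TorusTriangulation.Phi T))
    have h2 := LinearEquiv.finrank_eq (R := ℝ)
      (M := ((E → ℝ) × (F → ℝ)) ⧸ LinearMap.range (TorusTriangulation.Phi T))
      (N := {x // x ∈ (LinearMap.range (TorusTriangulation.Phi T)).dualAnnihilator})
      (Subspace.quotEquivAnnihilator (LinearMap.range (TorusTriangulation.Phi T)))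
    rw [hW] at h1
    rw [hannrank] at h2
    omega
  have hkerrank := LinearMap.finrank_range_add_finrank_ker (TorusTriangulation.Phi T)
  have hdom : Module.finrank ℝ (Cor → ℝ) = 3 * T.m := by
    rw [Module.finrank_fintype_fun_eq_card, T.card_cor]
  rw [hdom] at hkerrank
  -- D is the kernel of Φ
  have hDker : D = LinearMap.ker (TorusTriangulation.Phi T) := by
    ext v
    rw [hD, LinearMap.mem_ker]
    constructor
    · rintro ⟨h1, h2⟩
      have hfst : (TorusTriangulation.Phi T v).1 = 0 := by
        funext z
        obtain ⟨j, rfl⟩ := T.opp_surj z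
        rw [T.Phi_fst]
        simpa using h1 j
      have hsnd : (TorusTriangulation.Phi T v).2 = 0 := by
        funext z
        by_cases hz : ∃ j, T.tri j = z
        · obtain ⟨j, rfl⟩ := hz
          rw [T.Phi_snd]
          simpa using h2 j
        · push_neg at hz
          have : Finset.univ.filter (fun j => T.tri j = z) = ∅ := by
            apply Finset.filter_eq_empty_iff.mpr
            intro j _
            exact hz j
          show ∑ j ∈ Finset.univ.filter (fun j => T.tri j = z), v j = 0
          rw [this, Finset.sum_empty]
      exact Prod.ext hfst hsnd
    · intro hv
      constructor
      · intro j
        have := congrFun (congrArg Prod.fst hv) (T.opp j)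
        rw [T.Phi_fst] at this
        simpa using this
      · intro j
        have := congrFun (congrArg Prod.snd hv) (T.tri j)
        rw [T.Phi_snd] at this
        simpa using this
  have hE3 : Fintype.card E = 3 * Fintype.card V := by
    have := T.card_edges; have := T.card_verts; omega
  have hF2 : Fintype.card F = 2 * Fintype.card V := by
    have := T.card_faces; have := T.card_verts; omega
  have hm2 : T.m = 2 * Fintype.card V := by have := T.card_verts; omega
  have hDrank : Module.finrank ℝ D = Fintype.card V + 1 := by
    rw [hDker]; omega
  -- total angle sum
  have hsum : ∑ e, α e = (Fintype.card V : ℝ) * π := by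
    have h1 : ∑ v : V, ∑ j ∈ Finset.univ.filter (fun j => T.vert j = v),
        (α (T.opp (T.nxt j)) + α (T.opp (T.nxt (T.nxt j))))
        = (Fintype.card V : ℝ) * (4 * π) := by
      rw [Finset.sum_congr rfl fun v _ => hvert v]
      rw [Finset.sum_const, Finset.card_univ, nsmul_eq_mul]
    rw [Finset.sum_fiberwise] at h1
    have h2 : ∑ j, α (T.opp (T.nxt j)) = ∑ j, α (T.opp j) :=
      Fintype.sum_bijective T.nxt T.nxt_bij _ _ (fun x => rfl)
    have h3 : ∑ j, α (T.opp (T.nxt (T.nxt j))) = ∑ j, α (T.opp j) :=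
      Fintype.sum_bijective (fun j => T.nxt (T.nxt j))
        (T.nxt_bij.comp T.nxt_bij) _ _ (fun x => rfl)
    have h4 : ∑ j, α (T.opp j) = 2 * ∑ e, α e := by
      rw [← Finset.sum_fiberwise Finset.univ T.opp (fun j => α (T.opp j)),
        Finset.mul_sum]
      refine Finset.sum_congr rfl fun e _ => ?_
      obtain ⟨j, rfl⟩ := T.opp_surj e
      have := T.sum_oppFiber (fun k => α (T.opp k)) j
      rw [this, T.opp_sgm]
      ring
    rw [Finset.sum_add_distrib, h2, h3, h4] at h1
    linarith
  -- range Φ = ker ψ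
  have hpsine := TorusTriangulation.psi_ne_zero (E := E) hFne
  have hpsisurj : Function.Surjective (TorusTriangulation.psi (E := E) (F := F)) := by
    obtain ⟨x, hx⟩ : ∃ x, TorusTriangulation.psi (E := E) (F := F) x ≠ 0 := by
      by_contra hcon
      push_neg at hcon
      exact hpsine (LinearMap.ext fun x => by simpa using hcon x)
    exact surj_of_apply_ne_zero _ x hx
  have hpsiker : Module.finrank ℝ
      (LinearMap.ker (TorusTriangulation.psi (E := E) (F := F))) + 1
      = Fintype.card E + Fintype.card F := by
    have h5 := LinearMap.finrank_range_add_finrank_ker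
      (TorusTriangulation.psi (E := E) (F := F))
    rw [LinearMap.range_eq_top.mpr hpsisurj, finrank_top, Module.finrank_self, hW] at h5
    omega
  have hrange_eq : LinearMap.range (TorusTriangulation.Phi T)
      = LinearMap.ker (TorusTriangulation.psi (E := E) (F := F)) := by
    apply Submodule.eq_of_le_of_finrank_le
    · rintro w ⟨v, rfl⟩
      exact LinearMap.mem_ker.mpr (T.psi_comp v)
    · omega
  -- the inhomogeneous solution
  have hrmem : ((fun e => π - α e, fun _ : F => π) : (E → ℝ) × (F → ℝ))
      ∈ LinearMap.range (TorusTriangulation.Phi T) := by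
    rw [hrange_eq, LinearMap.mem_ker]
    have : TorusTriangulation.psi
        (((fun e => π - α e, fun _ : F => π)) : (E → ℝ) × (F → ℝ))
        = (∑ e : E, (π - α e)) - ∑ _f : F, π := rfl
    rw [this, Finset.sum_sub_distrib, hsum, Finset.sum_const, Finset.card_univ,
      Finset.sum_const, Finset.card_univ, nsmul_eq_mul, nsmul_eq_mul, hE3, hF2]
    push_cast
    ring
  obtain ⟨θ₀, hθ₀⟩ := hrmem
  have hsol1 : ∀ j, θ₀ j + θ₀ (T.sgm j) = π - α (T.opp j) := by
    intro j
    have := congrFun (congrArg Prod.fst hθ₀) (T.opp j)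
    rw [T.Phi_fst] at this
    exact this
  have hsol2 : ∀ j, θ₀ j + θ₀ (T.nxt j) + θ₀ (T.nxt (T.nxt j)) = π := by
    intro j
    have := congrFun (congrArg Prod.snd hθ₀) (T.tri j)
    rw [T.Phi_snd] at this
    exact this
  refine ⟨⟨θ₀, hsol1, hsol2⟩, hDrank, ?_⟩
  rintro h ⟨v, hvD, hv⟩ K
  obtain ⟨hv1, hv2⟩ := (hD v).mp hvD
  constructor
  · refine ⟨θ₀ + ((K - h θ₀) / h v) • v, fun j => ?_, fun j => ?_, ?_⟩
    · simp only [Pi.add_apply, Pi.smul_apply, smul_eq_mul]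
      linear_combination hsol1 j + ((K - h θ₀) / h v) * hv1 j
    · simp only [Pi.add_apply, Pi.smul_apply, smul_eq_mul]
      linear_combination hsol2 j + ((K - h θ₀) / h v) * hv2 j
    · rw [map_add, map_smul, smul_eq_mul]
      field_simp
      ring
  · intro D' hD'
    have hsub : D' = Submodule.map D.subtype (LinearMap.ker (h.domRestrict D)) := by
      ext x
      simp only [Submodule.mem_map, LinearMap.mem_ker, LinearMap.domRestrict_apply, hD']
      constructor
      · rintro ⟨hx, hhx⟩
        exact ⟨⟨x, hx⟩, hhx, rfl⟩
      · rintro ⟨⟨y, hy⟩, hhy, rfl⟩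
        exact ⟨hy, hhy⟩
    rw [hsub, Submodule.finrank_map_subtype_eq]
    have h5 := LinearMap.finrank_range_add_finrank_ker (h.domRestrict D)
    have hrt : LinearMap.range (h.domRestrict D) = ⊤ := by
      rw [LinearMap.range_eq_top]
      refine surj_of_apply_ne_zero _ (⟨v, hvD⟩ : D) ?_
      simpa using hv
    rw [hrt, finrank_top, Module.finrank_self] at h5
    omega
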